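/- For every integer k ≥ 2, every h ∈ Γ, and all w, z ∈ 𝔹ⁿ, Θ_{hw}^{(k)}(z) · (conj J(h,w))^k = Θ_w^{(k)}(z). -/

import Mathlib

open scoped BigOperators
open Complex MeasureTheory Filter Topology Matrix

namespace BallPaper

noncomputable section

variable {n : ℕ}

/-- The unit ball in ℂⁿ. -/
def ball (n : ℕ) : Set (Fin n → ℂ) := {z | ∑ i, ‖z i‖ ^ 2 < 1}

/-- ⟨z,w⟩ = z₁ conj w₁ + ... + zₙ conj wₙ − 1. -/
def pair (z w : Fin n → ℂ) : ℂ := ∑ i, z i * star (w i) - 1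

/-- The Hermitian form of signature (n,1) on ℂ^{n+1}:
⟨⟨u,v⟩⟩ = u₁ conj v₁ + ... + uₙ conj vₙ − u_{n+1} conj v_{n+1}. -/
def herm (u v : Fin (n + 1) → ℂ) : ℂ :=
  ∑ i : Fin n, u i.castSucc * star (v i.castSucc) - u (Fin.last n) * star (v (Fin.last n))

/-- SU(n,1): determinant-one matrices preserving the (n,1) Hermitian form. -/
def SU (n : ℕ) : Set (Matrix (Fin (n + 1)) (Fin (n + 1)) ℂ) :=
  {A | A.det = 1 ∧ ∀ u v, herm (A.mulVec u) (A.mulVec v) = herm u v}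

/-- The denominator a_{n+1,1} z₁ + ... + a_{n+1,n} zₙ + a_{n+1,n+1} of the
fractional-linear action. -/
def denom (A : Matrix (Fin (n + 1)) (Fin (n + 1)) ℂ) (z : Fin n → ℂ) : ℂ :=
  ∑ j : Fin n, A (Fin.last n) j.castSucc * z j + A (Fin.last n) (Fin.last n)

/-- The fractional-linear action of a matrix on ℂⁿ (defined on the ball). -/
def act (A : Matrix (Fin (n + 1)) (Fin (n + 1)) ℂ) (z : Fin n → ℂ) : Fin n → ℂ :=
  fun j => (∑ l : Fin n, A j.castSucc l.castSucc * z l + A j.castSucc (Fin.last n)) / denom A z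

/-- The complex Jacobian J(A,z) = (denominator)^{-(n+1)}. -/
def jac (A : Matrix (Fin (n + 1)) (Fin (n + 1)) ℂ) (z : Fin n → ℂ) : ℂ :=
  (denom A z)⁻¹ ^ (n + 1)

/-- The Bergman kernel K(z,w) = (n!/πⁿ) (−⟨z,w⟩)^{−(n+1)}. -/
def Kc (z w : Fin n → ℂ) : ℂ :=
  (((Nat.factorial n : ℝ) / Real.pi ^ n : ℝ) : ℂ) * (-(pair z w))⁻¹ ^ (n + 1)

/-- K(z,z) as a real-valued function: K(z,z) = (n!/πⁿ) (1−|z|²)^{−(n+1)}. -/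
def Kr (z : Fin n → ℂ) : ℝ :=
  (Nat.factorial n : ℝ) / Real.pi ^ n * ((1 - ∑ i, ‖z i‖ ^ 2)⁻¹) ^ (n + 1)

/-- c(𝔹ⁿ,k) = C((n+1)(k−1)+n, n). -/
def cB (n k : ℕ) : ℕ := Nat.choose ((n + 1) * (k - 1) + n) n

/-- The last index of Fin n. -/
def lastI (n : ℕ) (hn : 0 < n) : Fin n := ⟨n - 1, by omega⟩

/-- The geodesic C̃₀ = {z ∈ 𝔹ⁿ : z₁ = ... = z_{n−1} = 0, zₙ ∈ (−1,1) real}. -/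
def geo0 (n : ℕ) (hn : 0 < n) : Set (Fin n → ℂ) :=
  {z | (∀ i : Fin n, (i : ℕ) < n - 1 → z i = 0) ∧ (z (lastI n hn)).im = 0 ∧
    -1 < (z (lastI n hn)).re ∧ (z (lastI n hn)).re < 1}

/-- The point (0,...,0,x) of C̃₀. -/
def curve (n : ℕ) (hn : 0 < n) (x : ℝ) : Fin n → ℂ :=
  fun i => if i = lastI n hn then (x : ℂ) else 0

/-- The vector (X,1) ∈ ℂ^{n+1}. -/
def snoc1 (X : Fin n → ℂ) : Fin (n + 1) → ℂ := Fin.snoc X 1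

/-- The matrix A_γ, with columns v₁,...,v_{n−1},
⟨X,Y⟩⁻¹(X,1) + (1/2)(Y,1), ⟨X,Y⟩⁻¹(X,1) − (1/2)(Y,1). -/
def Amat (n : ℕ) (v : Fin (n - 1) → Fin (n + 1) → ℂ) (X Y : Fin n → ℂ) :
    Matrix (Fin (n + 1)) (Fin (n + 1)) ℂ :=
  Matrix.of fun i j =>
    if h : (j : ℕ) < n - 1 then v ⟨j, h⟩ i
    else if (j : ℕ) = n - 1 then ((pair X Y)⁻¹ • snoc1 X + (2 : ℂ)⁻¹ • snoc1 Y) i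
    else ((pair X Y)⁻¹ • snoc1 X - (2 : ℂ)⁻¹ • snoc1 Y) i

/-- σ = diag(1,...,1,−1). -/
def sigmaM (n : ℕ) : Matrix (Fin (n + 1)) (Fin (n + 1)) ℂ :=
  Matrix.diagonal fun i => if i = Fin.last n then -1 else 1

/-- Inverse hyperbolic cosine. -/
def arcosh (x : ℝ) : ℝ := Real.log (x + Real.sqrt (x ^ 2 - 1))

/-- Inverse hyperbolic tangent. -/
def artanh (x : ℝ) : ℝ := Real.log ((1 + x) / (1 - x)) / 2

/-- The hyperbolic (Bergman) distance on the ball, determined by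
cosh²(ρ(z,w)/2) = ⟨z,w⟩⟨w,z⟩/(⟨z,z⟩⟨w,w⟩). -/
def rho (z w : Fin n → ℂ) : ℝ :=
  2 * arcosh (Real.sqrt ((pair z w * pair w z).re / (pair z z * pair w w).re))

/-- A discrete subgroup Γ of SU(n,1) acting freely on the ball with compact quotient. -/
structure DiscreteGroup (n : ℕ) where
  Γ : Set (Matrix (Fin (n + 1)) (Fin (n + 1)) ℂ)
  sub_SU : Γ ⊆ SU n
  one_mem : 1 ∈ Γ
  mul_mem : ∀ {A B}, A ∈ Γ → B ∈ Γ → A * B ∈ Γ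
  inv_mem : ∀ {A}, A ∈ Γ → A⁻¹ ∈ Γ
  discrete : DiscreteTopology ↥Γ
  free : ∀ A ∈ Γ, (∃ z ∈ ball n, act A z = z) → A = 1
  cocompact : ∃ F : Set (Fin n → ℂ), F ⊆ ball n ∧ IsCompact F ∧
    ∀ z ∈ ball n, ∃ A ∈ Γ, act A z ∈ F

/-- A hyperbolic element γ of Γ, with real eigenvalues, real fixed points X, Y on the
boundary, eigenvalue data λ, and the eigenvectors v₁,...,v_{n−1} for eigenvalues ±1,
orthonormal with respect to the form ⟨⟨.,.⟩⟩. -/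
structure HypElt (n : ℕ) (G : DiscreteGroup n) where
  γ : Matrix (Fin (n + 1)) (Fin (n + 1)) ℂ
  mem : γ ∈ G.Γ
  ne_one : γ ≠ 1
  eig_real : ∀ μ ∈ spectrum ℂ γ, μ.im = 0
  X : Fin n → ℂ
  Y : Fin n → ℂ
  X_bd : ∑ i, ‖X i‖ ^ 2 = 1
  Y_bd : ∑ i, ‖Y i‖ ^ 2 = 1
  X_real : ∀ i, (X i).im = 0
  Y_real : ∀ i, (Y i).im = 0
  lam : ℝ
  lam_sq : 1 < lam ^ 2
  eigX : γ.mulVec (snoc1 X) = (lam : ℂ) • snoc1 X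
  eigY : γ.mulVec (snoc1 Y) = ((lam : ℂ))⁻¹ • snoc1 Y
  primitive : ∀ A ∈ G.Γ, ∀ m : ℕ, 2 ≤ m → A ^ m ≠ γ
  v : Fin (n - 1) → Fin (n + 1) → ℂ
  alph : Fin (n - 1) → ℂ
  alph_pm : ∀ j, alph j = 1 ∨ alph j = -1
  v_eig : ∀ j, γ.mulVec (v j) = alph j • v j
  v_on : ∀ j l, herm (v j) (v l) = if j = l then 1 else 0

variable {G : DiscreteGroup n}

/-- The matrix A_γ associated to the hyperbolic element γ. -/
def HypElt.A (H : HypElt n G) : Matrix (Fin (n + 1)) (Fin (n + 1)) ℂ :=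
  Amat n H.v H.X H.Y

/-- γ₀ = A_γ⁻¹ γ A_γ. -/
def HypElt.g0 (H : HypElt n G) : Matrix (Fin (n + 1)) (Fin (n + 1)) ℂ :=
  (H.A)⁻¹ * H.γ * H.A

/-- T = (λ²−1)/(λ²+1), the last coordinate of γ₀(0). -/
def HypElt.T (H : HypElt n G) : ℝ := (H.lam ^ 2 - 1) / (H.lam ^ 2 + 1)

/-- The geodesic C̃ in 𝔹ⁿ with endpoints X, Y, as the image of C̃₀ under A_γ. -/
def HypElt.Ct (H : HypElt n G) (hn : 0 < n) : Set (Fin n → ℂ) :=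
  act H.A '' geo0 n hn

/-- The length l(C) of the closed geodesic C, the hyperbolic distance from 0 to γ₀(0). -/
def HypElt.lenC (H : HypElt n G) : ℝ :=
  rho (0 : Fin n → ℂ) (act H.g0 (0 : Fin n → ℂ))

/-- A (measure-theoretic) fundamental domain for the action of Γ on the ball. -/
def IsFundDom (G : DiscreteGroup n) (F : Set (Fin n → ℂ)) : Prop :=
  F ⊆ ball n ∧ MeasurableSet F ∧ (∀ z ∈ ball n, ∃ A ∈ G.Γ, act A z ∈ F) ∧
    ∀ A ∈ G.Γ, A ≠ 1 → volume {z ∈ F | act A z ∈ F} = 0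

/-- The automorphy condition f(Az) J(A,z)^k = f(z). -/
def Automorphic (G : DiscreteGroup n) (k : ℕ) (f : (Fin n → ℂ) → ℂ) : Prop :=
  ∀ A ∈ G.Γ, ∀ z ∈ ball n, f (act A z) * jac A z ^ k = f z

/-- Membership in H̃⁰_Γ(k): holomorphic on the ball and automorphic of weight k. -/
def Htilde (G : DiscreteGroup n) (k : ℕ) (f : (Fin n → ℂ) → ℂ) : Prop :=
  DifferentiableOn ℂ f (ball n) ∧ Automorphic G k f

/-- The inner product (f,g) = ∫_M f ḡ K(z,z)^{−k} dV = ∫_F f ḡ K(z,z)^{1−k} dV_e,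
computed over a fundamental domain F. -/
def iprod (F : Set (Fin n → ℂ)) (k : ℕ) (f g : (Fin n → ℂ) → ℂ) : ℂ :=
  ∫ z in F, f z * star (g z) * ((Kr z ^ ((1 : ℤ) - (k : ℤ)) : ℝ) : ℂ)

/-- The Poincaré series Θ_w^{(k)}(z) = c(𝔹ⁿ,k) Σ_{A∈Γ} K(Az,w)^k J(A,z)^k. -/
def ThetaPt (G : DiscreteGroup n) (k : ℕ) (w z : Fin n → ℂ) : ℂ :=
  (cB n k : ℂ) * ∑' A : ↥G.Γ, Kc (act (A : Matrix (Fin (n + 1)) (Fin (n + 1)) ℂ) z) w ^ k *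
    jac (A : Matrix (Fin (n + 1)) (Fin (n + 1)) ℂ) z ^ k

/-- The relative Poincaré series
Θ_C^{(k)}(z) = ∫_C Θ_w^{(k)}(z) K(w,w)^{−k/2} ((A_γ⁻¹)*φ)(w), written out over one
period of C̃, parametrized by w = A_γ(0,...,0,x), x ∈ [0,T]. -/
def ThetaC (hn : 0 < n) (H : HypElt n G) (k : ℕ) (z : Fin n → ℂ) : ℂ :=
  ∫ x in (0 : ℝ)..H.T, ThetaPt G k (act H.A (curve n hn x)) z *
    ((Kr (act H.A (curve n hn x)) ^ (-(k : ℝ) / 2) : ℝ) : ℂ) *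
    ((Kr (curve n hn x) ^ (((n : ℝ) + 1))⁻¹ : ℝ) : ℂ)

/-- The set of integer powers of a matrix. -/
def zpows (g : Matrix (Fin (n + 1)) (Fin (n + 1)) ℂ) :
    Set (Matrix (Fin (n + 1)) (Fin (n + 1)) ℂ) := {h | ∃ m : ℤ, h = g ^ m}

/-- The conjugate group A_γ⁻¹ Γ A_γ. -/
def conjGrp (G : DiscreteGroup n) (H : HypElt n G) :
    Set (Matrix (Fin (n + 1)) (Fin (n + 1)) ℂ) :=
  (fun g => (H.A)⁻¹ * g * H.A) '' G.Γ

end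

end BallPaper

namespace BallPaper
noncomputable section
variable {n : ℕ}

lemma mul_star_self (c : ℂ) : c * star c = ((‖c‖ ^ 2 : ℝ) : ℂ) := by
  rw [RCLike.star_def, Complex.mul_conj, Complex.normSq_eq_norm_sq]

lemma re_sum_sub_one (f : Fin n → ℝ) : ((∑ i, ((f i : ℂ))) - 1).re = ∑ i, f i - 1 := by
  rw [← Complex.ofReal_sum]
  simp

lemma herm_snoc1 (z w : Fin n → ℂ) : herm (snoc1 z) (snoc1 w) = pair z w := by
  simp [herm, snoc1, pair]

lemma herm_smul (c d : ℂ) (u v : Fin (n + 1) → ℂ) :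
    herm (c • u) (d • v) = c * star d * herm u v := by
  simp only [herm, Pi.smul_apply, smul_eq_mul, star_mul', mul_sub, Finset.mul_sum]
  congr 1
  · exact Finset.sum_congr rfl fun i _ => by ring
  · ring

lemma mulVec_snoc1 (C : Matrix (Fin (n + 1)) (Fin (n + 1)) ℂ) (z : Fin n → ℂ) :
    C.mulVec (snoc1 z) = Fin.snoc
      (fun i : Fin n => ∑ l, C i.castSucc l.castSucc * z l + C i.castSucc (Fin.last n))
      (denom C z) := by
  funext i
  refine Fin.lastCases ?_ ?_ i
  · simp [Matrix.mulVec, dotProduct, Fin.sum_univ_castSucc, snoc1, denom]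
  · intro i
    simp [Matrix.mulVec, dotProduct, Fin.sum_univ_castSucc, snoc1]

lemma mulVec_snoc1_eq_smul (C : Matrix (Fin (n + 1)) (Fin (n + 1)) ℂ) (z : Fin n → ℂ)
    (hd : denom C z ≠ 0) :
    C.mulVec (snoc1 z) = denom C z • snoc1 (act C z) := by
  rw [mulVec_snoc1]
  funext i
  refine Fin.lastCases ?_ ?_ i
  · simp [snoc1]
  · intro i
    simp only [Fin.snoc_castSucc, Pi.smul_apply, snoc1, smul_eq_mul, act]
    field_simp

lemma pair_self_re (v : Fin n → ℂ) : (pair v v).re = ∑ i, ‖v i‖ ^ 2 - 1 := by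
  simp only [pair, mul_star_self]
  exact re_sum_sub_one _

lemma denom_ne_zero (A : Matrix (Fin (n + 1)) (Fin (n + 1)) ℂ) (hA : A ∈ SU n)
    (z : Fin n → ℂ) (hz : z ∈ ball n) : denom A z ≠ 0 := by
  intro h0
  have h1 := hA.2 (snoc1 z) (snoc1 z)
  rw [herm_snoc1] at h1
  have hu : (A.mulVec (snoc1 z)) (Fin.last n) = 0 := by
    rw [mulVec_snoc1, Fin.snoc_last]; exact h0
  have h2 : (herm (A.mulVec (snoc1 z)) (A.mulVec (snoc1 z))).re =
      ∑ i : Fin n, ‖(A.mulVec (snoc1 z)) i.castSucc‖ ^ 2 := by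
    simp only [herm, hu, mul_star_self, zero_mul, sub_zero, ← Complex.ofReal_sum]
    simp [← Complex.ofReal_pow]
  have h3 : (0:ℝ) ≤ (pair z z).re := by
    rw [← h1, h2]
    positivity
  rw [pair_self_re] at h3
  have := hz.out
  simp only [ball, Set.mem_setOf_eq] at hz
  linarith

lemma pair_act (A : Matrix (Fin (n + 1)) (Fin (n + 1)) ℂ) (hA : A ∈ SU n)
    (z w : Fin n → ℂ) (hz : denom A z ≠ 0) (hw : denom A w ≠ 0) :
    pair (act A z) (act A w) = pair z w / (denom A z * star (denom A w)) := by
  have h1 := hA.2 (snoc1 z) (snoc1 w)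
  rw [mulVec_snoc1_eq_smul A z hz, mulVec_snoc1_eq_smul A w hw, herm_smul, herm_snoc1,
    herm_snoc1] at h1
  rw [eq_div_iff (mul_ne_zero hz (star_ne_zero.mpr hw))]
  linear_combination h1

lemma act_mem_ball (A : Matrix (Fin (n + 1)) (Fin (n + 1)) ℂ) (hA : A ∈ SU n)
    (z : Fin n → ℂ) (hz : z ∈ ball n) : act A z ∈ ball n := by
  have hd := denom_ne_zero A hA z hz
  have h1 := pair_act A hA z z hd hd
  have hzre : (pair z z).re = ∑ i, ‖z i‖ ^ 2 - 1 := pair_self_re z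
  have hazre : (pair (act A z) (act A z)).re = ∑ i, ‖act A z i‖ ^ 2 - 1 := pair_self_re _
  rw [mul_star_self] at h1
  have hn0 : (0:ℝ) < ‖denom A z‖ := norm_pos_iff.mpr hd
  have hnorm : (0:ℝ) < ‖denom A z‖ ^ 2 := by positivity
  have h2 : (pair (act A z) (act A z)).re = (pair z z).re / (‖denom A z‖ ^ 2) := by
    rw [h1, Complex.div_ofReal_re]
  have hzlt : (pair z z).re < 0 := by rw [hzre]; have := hz.out; simp only [ball, Set.mem_setOf_eq] at hz; linarith
  have : (pair (act A z) (act A z)).re < 0 := by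
    rw [h2]; exact div_neg_of_neg_of_pos hzlt hnorm
  rw [hazre] at this
  simp only [ball, Set.mem_setOf_eq]
  linarith

lemma denom_mul (A B : Matrix (Fin (n + 1)) (Fin (n + 1)) ℂ) (z : Fin n → ℂ)
    (hB : denom B z ≠ 0) :
    denom (A * B) z = denom B z * denom A (act B z) := by
  have h : (A * B).mulVec (snoc1 z) = denom B z • (A.mulVec (snoc1 (act B z))) := by
    rw [← Matrix.mulVec_mulVec, mulVec_snoc1_eq_smul B z hB, Matrix.mulVec_smul]
  have h2 := congrFun h (Fin.last n)
  rw [mulVec_snoc1, Fin.snoc_last] at h2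
  rw [h2]
  simp only [Pi.smul_apply, smul_eq_mul, mulVec_snoc1, Fin.snoc_last]

lemma act_mul (A B : Matrix (Fin (n + 1)) (Fin (n + 1)) ℂ) (z : Fin n → ℂ)
    (hB : denom B z ≠ 0) (hA : denom A (act B z) ≠ 0) :
    act (A * B) z = act A (act B z) := by
  have hAB : denom (A * B) z ≠ 0 := by
    rw [denom_mul A B z hB]; exact mul_ne_zero hB hA
  have h : (A * B).mulVec (snoc1 z) = denom B z • (A.mulVec (snoc1 (act B z))) := by
    rw [← Matrix.mulVec_mulVec, mulVec_snoc1_eq_smul B z hB, Matrix.mulVec_smul]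
  rw [mulVec_snoc1_eq_smul (A * B) z hAB, mulVec_snoc1_eq_smul A (act B z) hA,
    denom_mul A B z hB, smul_smul] at h
  funext i
  have h2 := congrFun h i.castSucc
  simp only [Pi.smul_apply, smul_eq_mul, snoc1, Fin.snoc_castSucc] at h2
  exact mul_left_cancel₀ (mul_ne_zero hB hA) h2


lemma key_transf (h B : Matrix (Fin (n + 1)) (Fin (n + 1)) ℂ) (hh : h ∈ SU n) (hB : B ∈ SU n)
    (w z : Fin n → ℂ) (hw : w ∈ ball n) (hz : z ∈ ball n) :
    Kc (act (h * B) z) (act h w) * jac (h * B) z * star (jac h w) =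
      Kc (act B z) w * jac B z := by
  have hdB : denom B z ≠ 0 := denom_ne_zero B hB z hz
  have hz' : act B z ∈ ball n := act_mem_ball B hB z hz
  have hd1 : denom h (act B z) ≠ 0 := denom_ne_zero h hh _ hz'
  have hd2 : denom h w ≠ 0 := denom_ne_zero h hh w hw
  have hsd2 : star (denom h w) ≠ 0 := star_ne_zero.mpr hd2
  have hact : act (h * B) z = act h (act B z) := act_mul h B z hdB hd1
  have hdm : denom (h * B) z = denom B z * denom h (act B z) := denom_mul h B z hdB
  have hpair : pair (act h (act B z)) (act h w)
      = pair (act B z) w / (denom h (act B z) * star (denom h w)) :=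
    pair_act h hh _ w hd1 hd2
  unfold Kc jac
  rw [hact, hpair, hdm]
  have e1 : (-(pair (act B z) w / (denom h (act B z) * star (denom h w))))⁻¹
      = (-(pair (act B z) w))⁻¹ * (denom h (act B z) * star (denom h w)) := by
    rw [← neg_div, inv_div, div_eq_mul_inv, mul_comm]
  rw [e1, mul_pow, star_pow, star_inv₀]
  have this1 : (denom h (act B z) * star (denom h w)) ^ (n + 1) *
      ((denom B z * denom h (act B z))⁻¹) ^ (n + 1) * ((star (denom h w))⁻¹) ^ (n + 1)
      = ((denom B z)⁻¹) ^ (n + 1) := by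
    rw [← mul_pow, ← mul_pow]
    congr 1
    field_simp
  linear_combination (((Nat.factorial n : ℝ) / Real.pi ^ n : ℝ) : ℂ) *
    ((-(pair (act B z) w))⁻¹) ^ (n + 1) * this1


end
end BallPaper

open BallPaper in
/-- Θ_{hw}^{(k)}(z) · (conj J(h,w))^k = Θ_w^{(k)}(z) for h ∈ Γ. -/
theorem ThetaPt_transf (n : ℕ) (G : BallPaper.DiscreteGroup n) (k : ℕ) (hk : 2 ≤ k)
    (h : Matrix (Fin (n + 1)) (Fin (n + 1)) ℂ) (hh : h ∈ G.Γ)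
    (w z : Fin n → ℂ) (hw : w ∈ ball n) (hz : z ∈ ball n) :
    ThetaPt G k (act h w) z * star (jac h w) ^ k = ThetaPt G k w z := by
  classical
  have hhSU : h ∈ SU n := G.sub_SU hh
  have hdet : IsUnit h.det := by rw [hhSU.1]; exact isUnit_one
  let e : ↥G.Γ ≃ ↥G.Γ :=
    { toFun := fun B => ⟨h * B, G.mul_mem hh B.2⟩
      invFun := fun B => ⟨h⁻¹ * B, G.mul_mem (G.inv_mem hh) B.2⟩
      left_inv := fun B => Subtype.ext (by
        show h⁻¹ * (h * (B : Matrix (Fin (n + 1)) (Fin (n + 1)) ℂ)) = B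
        rw [← mul_assoc, Matrix.nonsing_inv_mul _ hdet, one_mul])
      right_inv := fun B => Subtype.ext (by
        show h * (h⁻¹ * (B : Matrix (Fin (n + 1)) (Fin (n + 1)) ℂ)) = B
        rw [← mul_assoc, Matrix.mul_nonsing_inv _ hdet, one_mul]) }
  unfold ThetaPt
  rw [mul_assoc, ← tsum_mul_right]
  congr 1
  rw [← Equiv.tsum_eq e (fun A : ↥G.Γ =>
    Kc (act (A : Matrix (Fin (n + 1)) (Fin (n + 1)) ℂ) z) (act h w) ^ k *
      jac (A : Matrix (Fin (n + 1)) (Fin (n + 1)) ℂ) z ^ k * star (jac h w) ^ k)]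
  refine tsum_congr fun B => ?_
  have hBSU : (B : Matrix (Fin (n + 1)) (Fin (n + 1)) ℂ) ∈ SU n := G.sub_SU B.2
  have hkey := key_transf h (B : Matrix (Fin (n + 1)) (Fin (n + 1)) ℂ) hhSU hBSU w z hw hz
  show Kc (act (h * (B : Matrix (Fin (n + 1)) (Fin (n + 1)) ℂ)) z) (act h w) ^ k *
      jac (h * (B : Matrix (Fin (n + 1)) (Fin (n + 1)) ℂ)) z ^ k * star (jac h w) ^ k =
    Kc (act (B : Matrix (Fin (n + 1)) (Fin (n + 1)) ℂ) z) w ^ k *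
      jac (B : Matrix (Fin (n + 1)) (Fin (n + 1)) ℂ) z ^ k
  rw [← mul_pow, ← mul_pow, hkey, mul_pow]
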